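/- arXiv:2102.02123 — 3 statements merged into one kernel-verified Lean document; each statement's English description precedes it below -/
import Mathlib

section
/- Let κ be a Poisson random variable with mean Λ = Δ(U − L), where Δ > 0 and L ≤ U are reals. Let χ_1, …, χ_κ be, conditionally on κ, i.i.d. uniform on [t₀, t₀+Δ], independent of κ, and let φ : [t₀, t₀+Δ] → [L, U] be a measurable function. Then E[ e^{−LΔ} (U−L)^{−κ} ∏_{k=1}^{κ} (U − φ(χ_k)) ] = exp( −∫_{t₀}^{t₀+Δ} φ(t) dt ). -/
open MeasureTheory ProbabilityTheory Real


namespace PoissonEstAux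


variable {Ω : Type*} {mΩ : MeasurableSpace Ω} {μ : Measure Ω}

lemma iIndepFun_congr {ι : Type*} {β : ι → Type*} {m : ∀ i, MeasurableSpace (β i)}
    {f f' : ∀ i, Ω → β i} (h : iIndepFun (m := m) f μ) (h' : ∀ i, f i =ᵐ[μ] f' i) :
    iIndepFun (m := m) f' μ := by
  rw [iIndepFun_iff_measure_inter_preimage_eq_mul] at h ⊢
  intro S sets hsets
  have key : ∀ i, f' i ⁻¹' sets i =ᵐ[μ] f i ⁻¹' sets i := by
    intro i
    filter_upwards [h' i] with ω hω
    show (f' i ω ∈ sets i) = (f i ω ∈ sets i)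
    rw [hω]
  have h2 : (⋂ i ∈ S, f' i ⁻¹' sets i) =ᵐ[μ] (⋂ i ∈ S, f i ⁻¹' sets i) := by
    rw [Filter.eventuallyEq_set]
    have : ∀ᵐ ω ∂μ, ∀ i ∈ (↑S : Set ι), ω ∈ f' i ⁻¹' sets i ↔ ω ∈ f i ⁻¹' sets i :=
      (MeasureTheory.ae_ball_iff S.countable_toSet).2 fun i _ => by
        filter_upwards [key i] with ω hω
        exact iff_of_eq hω
    filter_upwards [this] with ω hω
    simp only [Set.mem_iInter]
    exact ⟨fun H i hi => (hω i (by exact_mod_cast hi)).1 (H i hi),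
      fun H i hi => (hω i (by exact_mod_cast hi)).2 (H i hi)⟩
  rw [measure_congr h2, h S hsets]
  exact Finset.prod_congr rfl fun i _ => (measure_congr (key i)).symm

lemma integral_indep_prod {ι : Type*} [IsProbabilityMeasure μ] {f : ι → Ω → ℝ}
    (h : iIndepFun (m := fun _ => inferInstance) f μ) (hm : ∀ i, Measurable (f i)) (s : Finset ι) :
    ∫ ω, ∏ i ∈ s, f i ω ∂μ = ∏ i ∈ s, ∫ ω, f i ω ∂μ := by
  classical
  induction s using Finset.induction with
  | empty => simp
  | @insert a s ha ih =>
    rw [Finset.prod_insert ha]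
    have hindep : IndepFun (f a) (fun ω => ∏ i ∈ s, f i ω) μ := by
      have := (h.indepFun_finset_prod_of_notMem hm ha).symm
      simpa [Finset.prod_fn] using this
    have := hindep.integral_fun_mul_eq_mul_integral (hm a).aestronglyMeasurable
      (Finset.measurable_prod s (fun i _ => hm i)).aestronglyMeasurable
    simp only [Finset.prod_insert ha]
    calc ∫ ω, f a ω * ∏ i ∈ s, f i ω ∂μ
        = (∫ ω, f a ω ∂μ) * ∫ ω, ∏ i ∈ s, f i ω ∂μ := this
      _ = (∫ ω, f a ω ∂μ) * ∏ i ∈ s, ∫ ω, f i ω ∂μ := by rw [ih]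


lemma main_meas {Ω : Type*} [MeasureSpace Ω]
    [IsProbabilityMeasure (ℙ : Measure Ω)]
    (t0 Δ L U : ℝ) (hΔ : 0 < Δ) (hLU : L < U)
    (φ : ℝ → ℝ) (hφmeas : Measurable φ)
    (hφ : ∀ x ∈ Set.Icc t0 (t0 + Δ), φ x ∈ Set.Icc L U)
    (κ : Ω → ℕ) (χ : ℕ → Ω → ℝ) (hκm : Measurable κ) (hχm : ∀ k, Measurable (χ k))
    (hindep : iIndepFun
      (m := fun o : Option ℕ =>
        Option.rec (inferInstance : MeasurableSpace ℕ)
          (fun _ => (inferInstance : MeasurableSpace ℝ)) o)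
      (fun o => Option.rec
        (motive := fun o => Ω → Option.rec ℕ (fun _ => ℝ) o) κ (fun k => χ k) o) ℙ)
    (hκ : Measure.map κ ℙ = poissonMeasure (Real.toNNReal (Δ * (U - L))))
    (hχ : ∀ k, Measure.map (χ k) ℙ =
      (ENNReal.ofReal Δ)⁻¹ • volume.restrict (Set.Icc t0 (t0 + Δ))) :
    ∫ ω, Real.exp (-L * Δ) / (U - L) ^ (κ ω) *
        ∏ k ∈ Finset.range (κ ω), (U - φ (χ k ω)) ∂ℙ =
      Real.exp (-∫ t in t0..(t0 + Δ), φ t) := by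
  have hUL : (0:ℝ) < U - L := sub_pos.2 hLU
  set g : Ω → ℝ := fun ω => Real.exp (-L * Δ) / (U - L) ^ (κ ω) *
      ∏ k ∈ Finset.range (κ ω), (U - φ (χ k ω)) with hg_def
  -- measurability of g
  have hg : Measurable g := by
    have hF : Measurable (fun p : (ℕ → ℝ) × ℕ => Real.exp (-L * Δ) / (U - L) ^ p.2 *
        ∏ k ∈ Finset.range p.2, (U - φ (p.1 k))) := by
      apply measurable_from_prod_countable_left
      intro n
      have : Measurable fun x : ℕ → ℝ => ∏ k ∈ Finset.range n, (U - φ (x k)) :=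
        Finset.measurable_prod (Finset.range n)
          (fun k _ => measurable_const.sub (hφmeas.comp (measurable_pi_apply k)))
      show Measurable fun x : ℕ → ℝ =>
        Real.exp (-L * Δ) / (U - L) ^ n * ∏ k ∈ Finset.range n, (U - φ (x k))
      exact measurable_const.mul this
    exact hF.comp ((measurable_pi_lambda _ fun k => hχm k).prodMk hκm)
  -- a.e. membership of χ k in the interval
  have hmem : ∀ k, ∀ᵐ ω ∂(ℙ : Measure Ω), χ k ω ∈ Set.Icc t0 (t0 + Δ) := by
    intro k
    rw [ae_iff]
    have : {ω | ¬ χ k ω ∈ Set.Icc t0 (t0 + Δ)} = χ k ⁻¹' (Set.Icc t0 (t0 + Δ))ᶜ := rfl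
    rw [this, ← Measure.map_apply (hχm k) (measurableSet_Icc.compl), hχ k]
    simp [Measure.restrict_apply measurableSet_Icc.compl]
  have hmemall : ∀ᵐ ω ∂(ℙ : Measure Ω), ∀ k, χ k ω ∈ Set.Icc t0 (t0 + Δ) :=
    ae_all_iff.2 hmem
  -- pointwise bounds for g given membership
  have hbound : ∀ ω, (∀ k, χ k ω ∈ Set.Icc t0 (t0 + Δ)) →
      0 ≤ g ω ∧ g ω ≤ Real.exp (-L * Δ) := by
    intro ω hω
    have h1 : ∀ k ∈ Finset.range (κ ω), 0 ≤ U - φ (χ k ω) := fun k _ =>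
      sub_nonneg.2 (hφ _ (hω k)).2
    have h2 : ∀ k ∈ Finset.range (κ ω), U - φ (χ k ω) ≤ U - L := fun k _ =>
      sub_le_sub_left (hφ _ (hω k)).1 U
    have hp0 : (0:ℝ) ≤ ∏ k ∈ Finset.range (κ ω), (U - φ (χ k ω)) :=
      Finset.prod_nonneg h1
    have hple : ∏ k ∈ Finset.range (κ ω), (U - φ (χ k ω)) ≤ (U - L) ^ (κ ω) := by
      calc ∏ k ∈ Finset.range (κ ω), (U - φ (χ k ω))
          ≤ ∏ _k ∈ Finset.range (κ ω), (U - L) := Finset.prod_le_prod h1 h2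
        _ = (U - L) ^ (κ ω) := by simp
    constructor
    · exact mul_nonneg (div_nonneg (Real.exp_pos _).le (pow_nonneg hUL.le _)) hp0
    · calc g ω ≤ Real.exp (-L * Δ) / (U - L) ^ (κ ω) * (U - L) ^ (κ ω) := by
            apply mul_le_mul_of_nonneg_left hple
            exact div_nonneg (Real.exp_pos _).le (pow_nonneg hUL.le _)
        _ = Real.exp (-L * Δ) := div_mul_cancel₀ _ (pow_ne_zero _ hUL.ne')
  -- integrability of g
  have hgint : Integrable g ℙ := by
    refine Integrable.mono' (integrable_const (Real.exp (-L * Δ)))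
      hg.aestronglyMeasurable ?_
    filter_upwards [hmemall] with ω hω
    rw [Real.norm_eq_abs, abs_of_nonneg (hbound ω hω).1]
    exact (hbound ω hω).2
  -- decomposition over values of κ
  have hs_meas : ∀ n : ℕ, MeasurableSet (κ ⁻¹' {n}) := fun n => hκm (measurableSet_singleton n)
  have hsum1 : HasSum (fun n => ∫ ω in κ ⁻¹' {n}, g ω ∂ℙ) (∫ ω, g ω ∂ℙ) := by
    have hs_disj : Pairwise (Function.onFun Disjoint fun n => κ ⁻¹' {n}) := by
      intro m n hmn
      apply Set.disjoint_left.2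
      intro ω h1 h2
      exact hmn ((Set.mem_preimage.1 h1).symm.trans (Set.mem_preimage.1 h2))
    have hs_union : (⋃ n, κ ⁻¹' {n}) = Set.univ := by ext ω; simp
    have := hasSum_integral_iUnion hs_meas hs_disj
      (by rw [hs_union]; exact hgint.integrableOn)
    rwa [hs_union, Measure.restrict_univ] at this
  set J : ℝ := ∫ x in Set.Icc t0 (t0 + Δ), (U - φ x) with hJ
  -- value of expectation of individual factors
  have hFk : ∀ k : ℕ, ∫ ω, (U - φ (χ k ω)) ∂ℙ = Δ⁻¹ * J := by
    intro k
    have h1 : ∫ ω, (U - φ (χ k ω)) ∂ℙ = ∫ x, (U - φ x) ∂(Measure.map (χ k) ℙ) :=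
      (integral_map (hχm k).aemeasurable
        (measurable_const.sub hφmeas).aestronglyMeasurable).symm
    rw [h1, hχ k, integral_smul_measure, ← hJ]
    rw [ENNReal.toReal_inv, ENNReal.toReal_ofReal hΔ.le, smul_eq_mul]
  -- the per-n term
  have hterm : ∀ n : ℕ, ∫ ω in κ ⁻¹' {n}, g ω ∂ℙ =
      Real.exp (-L * Δ) / (U - L) ^ n *
        ((ℙ (κ ⁻¹' {n})).toReal * (Δ⁻¹ * J) ^ n) := by
    intro n
    set F : Option ℕ → Ω → ℝ := fun o => Option.rec
        (motive := fun _ => Ω → ℝ)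
        (fun ω => if κ ω = n then (1:ℝ) else 0)
        (fun k ω => U - φ (χ k ω)) o with hF
    have hFm : ∀ o, Measurable (F o) := by
      rintro (_ | k)
      · exact Measurable.ite (hs_meas n) measurable_const measurable_const
      · exact measurable_const.sub (hφmeas.comp (hχm k))
    have hFindep : iIndepFun (m := fun _ : Option ℕ =>
        (inferInstance : MeasurableSpace ℝ)) F ℙ := by
      have hGm : ∀ o : Option ℕ, @Measurable _ ℝ
          (Option.rec (motive := fun o => MeasurableSpace (Option.rec ℕ (fun _ => ℝ) o))
            (inferInstance : MeasurableSpace ℕ)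
            (fun _ => (inferInstance : MeasurableSpace ℝ)) o) _
          ((Option.rec (motive := fun o => (Option.rec ℕ (fun _ => ℝ) o : Type) → ℝ)
            (fun m => if m = n then (1:ℝ) else 0) (fun _ x => U - φ x) o)) := by
        rintro (_ | k)
        · exact measurable_of_countable _
        · exact measurable_const.sub hφmeas
      have h2 := hindep.comp
        (fun o => Option.rec (motive := fun o => (Option.rec ℕ (fun _ => ℝ) o : Type) → ℝ)
          (fun m => if m = n then (1:ℝ) else 0) (fun _ x => U - φ x) o) hGm
      have heq : (fun o : Option ℕ =>
          (Option.rec (motive := fun o => (Option.rec ℕ (fun _ => ℝ) o : Type) → ℝ)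
            (fun m => if m = n then (1:ℝ) else 0) (fun _ x => U - φ x) o) ∘
          (Option.rec (motive := fun o => Ω → Option.rec ℕ (fun _ => ℝ) o)
            κ (fun k => χ k) o)) = F := by
        funext o; cases o <;> rfl
      rwa [heq] at h2
    have hprod := integral_indep_prod hFindep hFm (Finset.insertNone (Finset.range n))
    have hprodL : (fun ω => ∏ o ∈ Finset.insertNone (Finset.range n), F o ω) =
        fun ω => F none ω * ∏ k ∈ Finset.range n, F (some k) ω := by
      funext ω; exact Finset.prod_insertNone (fun o => F o ω) _
    rw [hprodL, Finset.prod_insertNone (fun o => ∫ ω, F o ω ∂ℙ)] at hprod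
    have hnone : ∫ ω, F none ω ∂ℙ = (ℙ (κ ⁻¹' {n})).toReal := by
      have : F none = Set.indicator (κ ⁻¹' {n}) (fun _ => (1:ℝ)) := by
        funext ω
        by_cases h : κ ω = n <;>
          simp [hF, Set.indicator_apply, Set.mem_preimage, h]
      rw [this, integral_indicator_const (1:ℝ) (hs_meas n), smul_eq_mul, mul_one, measureReal_def]
    -- compute the set integral
    have hstep1 : ∫ ω in κ ⁻¹' {n}, g ω ∂ℙ =
        ∫ ω in κ ⁻¹' {n}, Real.exp (-L * Δ) / (U - L) ^ n *
          ∏ k ∈ Finset.range n, (U - φ (χ k ω)) ∂ℙ := by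
      apply setIntegral_congr_fun (hs_meas n)
      intro ω hω
      have : κ ω = n := hω
      simp [hg_def, this]
    rw [hstep1, integral_const_mul]
    congr 1
    have hstep2 : ∫ ω in κ ⁻¹' {n}, ∏ k ∈ Finset.range n, (U - φ (χ k ω)) ∂ℙ =
        ∫ ω, F none ω * ∏ k ∈ Finset.range n, F (some k) ω ∂ℙ := by
      rw [← integral_indicator (hs_meas n)]
      congr 1
      funext ω
      by_cases h : κ ω = n <;>
        simp [Set.indicator_apply, Set.mem_preimage, h, hF]
    rw [hstep2, hprod, hnone]
    congr 1
    rw [Finset.prod_congr rfl (fun k _ => hFk k), Finset.prod_const, Finset.card_range]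
  -- Poisson probabilities
  have hcoe : ((Real.toNNReal (Δ * (U - L))) : ℝ) = Δ * (U - L) :=
    Real.coe_toNNReal _ (by positivity)
  have hp : ∀ n : ℕ, (ℙ (κ ⁻¹' {n})).toReal =
      Real.exp (-(Δ * (U - L))) * (Δ * (U - L)) ^ n / (n.factorial : ℝ) := by
    intro n
    rw [← Measure.map_apply hκm (measurableSet_singleton n), hκ, poissonMeasure_singleton]
    rw [ENNReal.toReal_ofReal (by positivity)]
    rw [hcoe]
  -- integrability of φ on the interval, value of J
  have hφint : IntegrableOn φ (Set.Icc t0 (t0 + Δ)) volume := by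
    refine Integrable.mono' (integrable_const (max |L| |U|))
      hφmeas.aestronglyMeasurable ?_
    refine (ae_restrict_iff' measurableSet_Icc).2 (Filter.Eventually.of_forall fun x hx => ?_)
    have h := hφ x hx
    rw [Real.norm_eq_abs]
    exact abs_le.2 ⟨le_trans (neg_le_neg (le_max_left _ _)) (le_trans (neg_abs_le L) h.1),
      le_trans h.2 (le_trans (le_abs_self U) (le_max_right _ _))⟩
  have hvol : (volume (Set.Icc t0 (t0 + Δ))).toReal = Δ := by
    rw [Real.volume_Icc, add_sub_cancel_left, ENNReal.toReal_ofReal hΔ.le]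
  have hJval : J = U * Δ - ∫ x in Set.Icc t0 (t0 + Δ), φ x := by
    rw [hJ, integral_sub (integrable_const U) hφint, setIntegral_const, measureReal_def, hvol, smul_eq_mul,
      mul_comm]
  -- final summation
  have hiv : (∫ t in t0..(t0 + Δ), φ t) = ∫ x in Set.Icc t0 (t0 + Δ), φ x := by
    rw [intervalIntegral.integral_of_le (by linarith), ← integral_Icc_eq_integral_Ioc]
  have hsum2 : HasSum (fun n => ∫ ω in κ ⁻¹' {n}, g ω ∂ℙ)
      (Real.exp (-∫ t in t0..(t0 + Δ), φ t)) := by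
    have base := (NormedSpace.expSeries_div_hasSum_exp J).mul_left
      (Real.exp (-L * Δ) * Real.exp (-(Δ * (U - L))))
    have hterm2 : (fun n => Real.exp (-L * Δ) * Real.exp (-(Δ * (U - L))) * (J ^ n / (n.factorial : ℝ))) =
        fun n => ∫ ω in κ ⁻¹' {n}, g ω ∂ℙ := by
      funext n
      rw [hterm n, hp n]
      have h1 : (Δ * (U - L)) ^ n * (Δ⁻¹ * J) ^ n = (U - L) ^ n * J ^ n := by
        rw [← mul_pow, ← mul_pow]
        congr 1
        field_simp
      have h2 : Real.exp (-L * Δ) / (U - L) ^ n *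
            (Real.exp (-(Δ * (U - L))) * (Δ * (U - L)) ^ n / (n.factorial : ℝ) * (Δ⁻¹ * J) ^ n)
          = Real.exp (-L * Δ) * Real.exp (-(Δ * (U - L))) *
            (((Δ * (U - L)) ^ n * (Δ⁻¹ * J) ^ n) / ((U - L) ^ n * (n.factorial : ℝ))) := by
        ring
      rw [h2, h1, mul_div_mul_left _ _ (pow_ne_zero n hUL.ne')]
    have htot : Real.exp (-L * Δ) * Real.exp (-(Δ * (U - L))) * NormedSpace.exp J =
        Real.exp (-∫ t in t0..(t0 + Δ), φ t) := by
      rw [← Real.exp_eq_exp_ℝ, ← Real.exp_add, ← Real.exp_add]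
      congr 1
      rw [hiv, hJval]
      ring
    rw [hterm2, htot] at base
    exact base
  exact hsum1.unique hsum2

end PoissonEstAux


/-- Unbiasedness of the Poisson estimator (UE-a):
with `κ ~ Poisson(Δ(U−L))` and `χ_k` i.i.d. uniform on `[t₀, t₀+Δ]`, all
independent, and `φ : [t₀,t₀+Δ] → [L,U]` measurable,
`E[e^{−LΔ}(U−L)^{−κ} ∏_{k<κ}(U−φ(χ_k))] = exp(−∫_{t₀}^{t₀+Δ} φ)`. -/
theorem poisson_estimator_unbiased {Ω : Type*} [MeasureSpace Ω]
    [IsProbabilityMeasure (ℙ : Measure Ω)]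
    (t0 Δ L U : ℝ) (hΔ : 0 < Δ) (hLU : L < U)
    (φ : ℝ → ℝ) (hφmeas : Measurable φ)
    (hφ : ∀ x ∈ Set.Icc t0 (t0 + Δ), φ x ∈ Set.Icc L U)
    (κ : Ω → ℕ) (χ : ℕ → Ω → ℝ)
    (hindep : iIndepFun
      (m := fun o : Option ℕ =>
        Option.rec (inferInstance : MeasurableSpace ℕ)
          (fun _ => (inferInstance : MeasurableSpace ℝ)) o)
      (fun o => Option.rec
        (motive := fun o => Ω → Option.rec ℕ (fun _ => ℝ) o) κ (fun k => χ k) o) ℙ)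
    (hκ : Measure.map κ ℙ = poissonMeasure (Real.toNNReal (Δ * (U - L))))
    (hχ : ∀ k, Measure.map (χ k) ℙ =
      (ENNReal.ofReal Δ)⁻¹ • volume.restrict (Set.Icc t0 (t0 + Δ))) :
    ∫ ω, Real.exp (-L * Δ) / (U - L) ^ (κ ω) *
        ∏ k ∈ Finset.range (κ ω), (U - φ (χ k ω)) ∂ℙ =
      Real.exp (-∫ t in t0..(t0 + Δ), φ t) := by
  have hκae : AEMeasurable κ (ℙ : Measure Ω) := by
    by_contra h
    rw [Measure.map_of_not_aemeasurable h] at hκ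
    have h0 := congrArg (fun ν : Measure ℕ => ν Set.univ) hκ
    simp [measure_univ] at h0
  have hχae : ∀ k, AEMeasurable (χ k) (ℙ : Measure Ω) := by
    intro k
    by_contra h
    have hk := hχ k
    rw [Measure.map_of_not_aemeasurable h] at hk
    have h0 := congrArg (fun ν : Measure ℝ => ν Set.univ) hk
    have h1 : ((ENNReal.ofReal Δ)⁻¹ • volume.restrict (Set.Icc t0 (t0 + Δ)))
        Set.univ = 1 := by
      rw [Measure.smul_apply, Measure.restrict_apply_univ, Real.volume_Icc,
        add_sub_cancel_left, smul_eq_mul]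
      exact ENNReal.inv_mul_cancel (by simp [hΔ]) ENNReal.ofReal_ne_top
    rw [h1] at h0
    simp at h0
  set κ' : Ω → ℕ := hκae.mk κ with hκ'def
  set χ' : ℕ → Ω → ℝ := fun k => (hχae k).mk (χ k) with hχ'def
  have hκm : Measurable κ' := hκae.measurable_mk
  have hχm : ∀ k, Measurable (χ' k) := fun k => (hχae k).measurable_mk
  have hindep' : iIndepFun
      (m := fun o : Option ℕ =>
        Option.rec (inferInstance : MeasurableSpace ℕ)
          (fun _ => (inferInstance : MeasurableSpace ℝ)) o)
      (fun o => Option.rec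
        (motive := fun o => Ω → Option.rec ℕ (fun _ => ℝ) o) κ' (fun k => χ' k) o) ℙ := by
    apply PoissonEstAux.iIndepFun_congr hindep
    rintro (_ | k)
    · exact hκae.ae_eq_mk
    · exact (hχae k).ae_eq_mk
  have hκ2 : Measure.map κ' ℙ = poissonMeasure (Real.toNNReal (Δ * (U - L))) := by
    rw [← Measure.map_congr hκae.ae_eq_mk, hκ]
  have hχ2 : ∀ k, Measure.map (χ' k) ℙ =
      (ENNReal.ofReal Δ)⁻¹ • volume.restrict (Set.Icc t0 (t0 + Δ)) := fun k => by
    rw [← Measure.map_congr (hχae k).ae_eq_mk, hχ k]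
  have hmain := PoissonEstAux.main_meas t0 Δ L U hΔ hLU φ hφmeas hφ κ' χ' hκm hχm
    hindep' hκ2 hχ2
  rw [← hmain]
  apply integral_congr_ae
  filter_upwards [hκae.ae_eq_mk, MeasureTheory.ae_all_iff.2 fun k => (hχae k).ae_eq_mk]
    with ω h1 h2
  rw [h1]
  congr 1
  exact Finset.prod_congr rfl fun k _ => by rw [h2 k]
end

section
/- Let κ be a nonnegative-integer-valued random variable with probability mass function p(k), k ≥ 0, with p(k) > 0 whenever f_k > 0. Let Δ > 0, U real, φ : [t₀, t₀+Δ] → ℝ measurable with φ ≤ U, and χ_1, χ_2, … i.i.d. Uniform[t₀, t₀+Δ] independent of κ. Define ρ̂ = (Δ^κ e^{−UΔ} / (κ! p(κ))) ∏_{k=1}^{κ}(U − φ(χ_k)). Then E[ρ̂] = exp( −∫_{t₀}^{t₀+Δ} φ(t) dt ), provided ∫_{t₀}^{t₀+Δ}(U−φ) dt < ∞ and the relevant series converges absolutely. -/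
open MeasureTheory ProbabilityTheory Real

lemma prod_integral_aux {Ω ι : Type*} [MeasureSpace Ω] [IsProbabilityMeasure (ℙ : Measure Ω)]
    {f : ι → Ω → ℝ}
    (hindep : iIndepFun (m := fun _ => (inferInstance : MeasurableSpace ℝ)) f ℙ)
    (hmeas : ∀ i, Measurable (f i)) (hint : ∀ i, Integrable (f i) ℙ) (s : Finset ι) :
    Integrable (∏ i ∈ s, f i) ℙ ∧
      ∫ ω, ∏ i ∈ s, f i ω ∂ℙ = ∏ i ∈ s, ∫ ω, f i ω ∂ℙ := by
  classical
  induction s using Finset.induction_on with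
  | empty =>
      refine ⟨?_, by simp⟩
      simpa [Pi.one_def] using integrable_const (1 : ℝ) (μ := ℙ)
  | @insert a s ha ih =>
      have hIndep : IndepFun (∏ j ∈ s, f j) (f a) ℙ :=
        hindep.indepFun_finsetProd_of_notMem hmeas ha
      have hint' : Integrable (∏ j ∈ s, f j) ℙ := ih.1
      have hmul : Integrable ((∏ j ∈ s, f j) * f a) ℙ :=
        hIndep.integrable_mul hint' (hint a)
      have hintmul : ∫ ω, ((∏ j ∈ s, f j) * f a) ω ∂ℙ =
          (∫ ω, (∏ j ∈ s, f j) ω ∂ℙ) * ∫ ω, f a ω ∂ℙ :=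
        hIndep.integral_mul_eq_mul_integral hint'.aestronglyMeasurable (hint a).aestronglyMeasurable
      constructor
      · rw [Finset.prod_insert ha]
        have : f a * ∏ j ∈ s, f j = (∏ j ∈ s, f j) * f a := mul_comm _ _
        rw [this]
        exact hmul
      · rw [Finset.prod_insert ha]
        have h2 : ∫ ω, ∏ i ∈ insert a s, f i ω ∂ℙ = ∫ ω, ((∏ j ∈ s, f j) * f a) ω ∂ℙ := by
          congr 1; funext ω
          simp [Finset.prod_insert ha, mul_comm]
        rw [h2, hintmul, mul_comm]
        congr 1
        simpa [Finset.prod_apply] using ih.2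

/-- Unbiasedness of the generalized Poisson-type estimator with an arbitrary
(everywhere positive) importance distribution `p` on `ℕ`:
`E[(Δ^κ e^{−UΔ}/(κ! p(κ))) ∏_{k<κ}(U−φ(χ_k))] = exp(−∫_{t₀}^{t₀+Δ} φ)`,
provided `φ ≤ U` is integrable on the interval and the estimator is
integrable. -/
theorem general_estimator_unbiased {Ω : Type*} [MeasureSpace Ω]
    [IsProbabilityMeasure (ℙ : Measure Ω)]
    (t0 Δ U : ℝ) (hΔ : 0 < Δ)
    (φ : ℝ → ℝ) (hφmeas : Measurable φ)
    (hφU : ∀ x ∈ Set.Icc t0 (t0 + Δ), φ x ≤ U)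
    (hφint : IntervalIntegrable φ volume t0 (t0 + Δ))
    (p : ℕ → ℝ) (hp : ∀ k, 0 < p k)
    (κ : Ω → ℕ) (χ : ℕ → Ω → ℝ)
    (hκmeas : Measurable κ) (hχmeas : ∀ k, Measurable (χ k))
    (hindep : iIndepFun (m :=
      (fun o : Option ℕ =>
        Option.rec (inferInstance : MeasurableSpace ℕ)
          (fun _ => (inferInstance : MeasurableSpace ℝ)) o))
      (fun o => Option.rec
        (motive := fun o => Ω → Option.rec ℕ (fun _ => ℝ) o) κ (fun k => χ k) o) ℙ)
    (hκ : ∀ k, ℙ {ω | κ ω = k} = ENNReal.ofReal (p k))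
    (hχ : ∀ k, Measure.map (χ k) ℙ =
      (ENNReal.ofReal Δ)⁻¹ • volume.restrict (Set.Icc t0 (t0 + Δ)))
    (ρhat : Ω → ℝ)
    (hρ : ∀ ω, ρhat ω = Δ ^ (κ ω) * Real.exp (-U * Δ) /
        ((Nat.factorial (κ ω) : ℝ) * p (κ ω)) *
      ∏ k ∈ Finset.range (κ ω), (U - φ (χ k ω)))
    (hρint : Integrable ρhat ℙ) :
    ∫ ω, ρhat ω ∂ℙ = Real.exp (-∫ t in t0..(t0 + Δ), φ t) := by
  classical
  have hle : t0 ≤ t0 + Δ := by linarith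
  set A : Set ℝ := Set.Icc t0 (t0 + Δ) with hA
  set g : ℝ → ℝ := fun x => U - φ x with hg
  have hgmeas : Measurable g := measurable_const.sub hφmeas
  have hgI : IntervalIntegrable g volume t0 (t0 + Δ) :=
    intervalIntegrable_const.sub hφint
  have hgA : IntegrableOn g A volume := by
    rw [hA, integrableOn_Icc_iff_integrableOn_Ioc]
    exact hgI.1
  set I : ℝ := ∫ x in A, g x with hI
  -- value of I
  have hIval : I = U * Δ - ∫ t in t0..(t0 + Δ), φ t := by
    rw [hI, hA, integral_Icc_eq_integral_Ioc, ← intervalIntegral.integral_of_le hle]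
    rw [show (fun x => g x) = fun x => U - φ x from rfl]
    rw [intervalIntegral.integral_sub intervalIntegrable_const hφint,
      intervalIntegral.integral_const]
    simp [smul_eq_mul]
    ring
  -- distribution facts for χ
  have hninv : ((ENNReal.ofReal Δ)⁻¹ : ENNReal) ≠ ⊤ := by
    simp [ENNReal.inv_ne_top, ENNReal.ofReal_pos.mpr hΔ, (ENNReal.ofReal_pos.mpr hΔ).ne']
  have hGint : ∀ i, Integrable (fun ω => g (χ i ω)) ℙ := by
    intro i
    have h1 : Integrable g (Measure.map (χ i) ℙ) := by
      rw [hχ i]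
      exact hgA.smul_measure hninv
    exact (integrable_map_measure hgmeas.aestronglyMeasurable
      (hχmeas i).aemeasurable).mp h1
  have hGval : ∀ i, ∫ ω, g (χ i ω) ∂ℙ = Δ⁻¹ * I := by
    intro i
    rw [show (∫ ω, g (χ i ω) ∂ℙ) = ∫ ω, g ω ∂(Measure.map (χ i) ℙ) from
      (integral_map (hχmeas i).aemeasurable hgmeas.aestronglyMeasurable).symm,
      hχ i, integral_smul_measure]
    rw [ENNReal.toReal_inv, ENNReal.toReal_ofReal hΔ.le]
    simp [hI, smul_eq_mul]
  -- decomposition sets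
  set sk : ℕ → Set Ω := fun k => κ ⁻¹' {k} with hsk
  have hskmeas : ∀ k, MeasurableSet (sk k) := fun k => hκmeas (measurableSet_singleton k)
  have hskdisj : Pairwise (Function.onFun Disjoint sk) := by
    intro i j hij
    simp only [Function.onFun, hsk]
    apply Set.disjoint_left.mpr
    intro ω hi hj
    exact hij (by simp_all)
  have hskunion : (⋃ k, sk k) = Set.univ := by
    ext ω; simp [hsk]
  -- the constant
  set c : ℕ → ℝ := fun k => Δ ^ k * Real.exp (-U * Δ) / ((Nat.factorial k : ℝ) * p k)
    with hc
  -- per-k computation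
  have hterm : ∀ k : ℕ, ∫ ω in sk k, ρhat ω ∂ℙ = Real.exp (-U * Δ) * (I ^ k / (Nat.factorial k)) := by
    intro k
    -- the composed independent family
    set gk : ∀ o : Option ℕ, (Option.rec ℕ (fun _ => ℝ) o : Type) → ℝ :=
      fun o => Option.rec (motive := fun o => (Option.rec ℕ (fun _ => ℝ) o : Type) → ℝ)
        (fun n => if n = k then (1 : ℝ) else 0) (fun _ => g) o with hgk
    have hind_meas : Measurable (fun n : ℕ => if n = k then (1 : ℝ) else 0) :=
      fun _ _ => trivial
    have hgkmeas : ∀ o, @Measurable _ _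
        (Option.rec (motive := fun o => MeasurableSpace (Option.rec ℕ (fun _ => ℝ) o))
          inferInstance (fun _ => inferInstance) o)
        (inferInstance : MeasurableSpace ℝ) (gk o) := by
      rintro (_ | i)
      · exact hind_meas
      · exact hgmeas
    have hF : iIndepFun (m := fun _ : Option ℕ => (inferInstance : MeasurableSpace ℝ))
        (fun o => gk o ∘ (Option.rec
          (motive := fun o => Ω → Option.rec ℕ (fun _ => ℝ) o) κ (fun k => χ k) o)) ℙ :=
      hindep.comp gk hgkmeas
    set F : Option ℕ → Ω → ℝ := fun o => gk o ∘ (Option.rec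
      (motive := fun o => Ω → Option.rec ℕ (fun _ => ℝ) o) κ (fun k => χ k) o) with hFdef
    have hFnone : F none = fun ω => if κ ω = k then (1 : ℝ) else 0 := rfl
    have hFsome : ∀ i, F (some i) = fun ω => g (χ i ω) := fun i => rfl
    have hFmeas : ∀ o, Measurable (F o) := by
      rintro (_ | i)
      · exact hind_meas.comp hκmeas
      · exact hgmeas.comp (hχmeas i)
    have hFint : ∀ o, Integrable (F o) ℙ := by
      rintro (_ | i)
      · refine (integrable_const (1 : ℝ)).mono' (hFmeas none).aestronglyMeasurable ?_
        filter_upwards with ω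
        by_cases h : κ ω = k <;> simp [hFnone, h]
      · exact hGint i
    -- integrals of the factors
    have hFnone_int : ∫ ω, F none ω ∂ℙ = p k := by
      have : F none = (sk k).indicator (fun _ => (1 : ℝ)) := by
        funext ω
        rw [hFnone]
        by_cases h : κ ω = k <;> simp [Set.indicator, hsk, h]
      rw [this, integral_indicator_const _ (hskmeas k)]
      have : ℙ (sk k) = ENNReal.ofReal (p k) := by
        rw [hsk]; exact hκ k
      rw [measureReal_def, this, smul_eq_mul, mul_one, ENNReal.toReal_ofReal (hp k).le]
    -- the finset
    set t : Finset (Option ℕ) := insert none ((Finset.range k).image some) with ht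
    have hnone_mem : none ∉ (Finset.range k).image some := by simp
    have haux := prod_integral_aux hF hFmeas hFint t
    have hprod_pt : ∀ ω, ∏ o ∈ t, F o ω
        = F none ω * ∏ i ∈ Finset.range k, g (χ i ω) := by
      intro ω
      rw [ht, Finset.prod_insert hnone_mem, Finset.prod_image (by simp)]
      simp only [hFsome]
    have hprod_int : ∏ o ∈ t, ∫ ω, F o ω ∂ℙ = p k * (Δ⁻¹ * I) ^ k := by
      rw [ht, Finset.prod_insert hnone_mem, Finset.prod_image (by simp), hFnone_int]
      congr 1
      rw [Finset.prod_congr rfl (fun i _ => by rw [hFsome i, hGval i]),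
        Finset.prod_const, Finset.card_range]
    -- relate the restricted integral to the product
    have hindicator : (sk k).indicator ρhat
        = fun ω => c k * (F none ω * ∏ i ∈ Finset.range k, g (χ i ω)) := by
      funext ω
      by_cases h : κ ω = k
      · have hmem : ω ∈ sk k := h
        rw [Set.indicator_of_mem hmem, hρ ω, hFnone]
        simp only [h, eq_self_iff_true, if_true, one_mul, hc, hg]
      · have hmem : ω ∉ sk k := h
        rw [Set.indicator_of_notMem hmem, hFnone]
        simp [h]
    calc ∫ ω in sk k, ρhat ω ∂ℙ
        = ∫ ω, (sk k).indicator ρhat ω ∂ℙ := (integral_indicator (hskmeas k)).symm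
      _ = ∫ ω, c k * ∏ o ∈ t, F o ω ∂ℙ := by
          rw [hindicator]
          congr 1; funext ω; rw [hprod_pt ω]
      _ = c k * ∫ ω, ∏ o ∈ t, F o ω ∂ℙ := by rw [integral_const_mul]
      _ = c k * (p k * (Δ⁻¹ * I) ^ k) := by rw [haux.2, hprod_int]
      _ = Real.exp (-U * Δ) * (I ^ k / (Nat.factorial k)) *
            ((Δ * Δ⁻¹) ^ k * (p k / p k)) := by
          rw [hc]; ring
      _ = Real.exp (-U * Δ) * (I ^ k / (Nat.factorial k)) := by
          rw [mul_inv_cancel₀ hΔ.ne', one_pow, div_self (hp k).ne', one_mul, mul_one]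
  -- sum up
  have hsum1 : HasSum (fun k => ∫ ω in sk k, ρhat ω ∂ℙ) (∫ ω, ρhat ω ∂ℙ) := by
    have := hasSum_integral_iUnion (μ := ℙ) (f := ρhat) hskmeas hskdisj
      (by rw [hskunion]; exact integrableOn_univ.mpr hρint)
    rwa [hskunion, Measure.restrict_univ] at this
  have hsum2 : HasSum (fun k : ℕ => Real.exp (-U * Δ) * (I ^ k / (Nat.factorial k)))
      (Real.exp (-U * Δ) * Real.exp I) := by
    have := (NormedSpace.expSeries_div_hasSum_exp (𝔸 := ℝ) I).mul_left (Real.exp (-U * Δ))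
    rwa [← Real.exp_eq_exp_ℝ] at this
  have : ∫ ω, ρhat ω ∂ℙ = Real.exp (-U * Δ) * Real.exp I := by
    refine HasSum.unique ?_ hsum2
    have : (fun k => ∫ ω in sk k, ρhat ω ∂ℙ)
        = fun k : ℕ => Real.exp (-U * Δ) * (I ^ k / (Nat.factorial k)) := by
      funext k; exact hterm k
    rwa [this] at hsum1
  rw [this, ← Real.exp_add, hIval]
  ring_nf
end

section
/- With κ ~ Poisson(λ), λ = [Δ ∫_{t₀}^{t₀+Δ}(U−φ(t))² dt]^{1/2}, U an upper bound for φ and Φ a lower bound (inf φ ≥ Φ > −∞), the second moment of the estimator ρ̂ = (Δ^κ e^{−(U−Φ)Δ}/(κ! p(κ))) ∏_{k=1}^κ (U−φ(χ_k)) satisfies E[ρ̂²] = exp(2(λ − (U−Φ)Δ)) ≤ 1, using that λ ≤ (U−Φ)Δ. -/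
open MeasureTheory ProbabilityTheory Real

lemma aux_prod_split {Ω ι : Type*} [MeasureSpace Ω] [IsProbabilityMeasure (ℙ : Measure Ω)]
    {β : ι → Type*} {m : ∀ i, MeasurableSpace (β i)} (X : ∀ i, Ω → β i)
    (hXmeas : ∀ i, Measurable (X i)) (hindep : iIndepFun (m := m) X ℙ)
    (g : ∀ i, β i → ℝ) (hgmeas : ∀ i, Measurable (g i)) (hgnn : ∀ i x, 0 ≤ g i x)
    (s : Finset ι) :
    ∫ ω, ∏ i ∈ s, g i (X i ω) ∂ℙ = ∏ i ∈ s, ∫ ω, g i (X i ω) ∂ℙ := by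
  classical
  induction s using Finset.induction_on with
  | empty => simp
  | @insert i s hi ih =>
    have hYZ : IndepFun (fun ω => g i (X i ω)) (fun ω => ∏ j ∈ s, g j (X j ω)) ℙ := by
      have hST : Disjoint ({i} : Finset ι) s := Finset.disjoint_singleton_left.mpr hi
      have base := hindep.indepFun_finset {i} s hST hXmeas
      have hGmeas : Measurable (fun v : ∀ j : ({i} : Finset ι), β j =>
          g i (v ⟨i, Finset.mem_singleton_self _⟩)) :=
        (hgmeas i).comp (measurable_pi_apply _)
      have hHmeas : Measurable (fun v : ∀ j : s, β j =>
          ∏ j ∈ s.attach, g j.1 (v j)) :=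
        Finset.measurable_prod _ (fun j _ => (hgmeas j.1).comp (measurable_pi_apply _))
      have key := base.comp hGmeas hHmeas
      have e1 : (fun v : ∀ j : ({i} : Finset ι), β j =>
          g i (v ⟨i, Finset.mem_singleton_self _⟩)) ∘ (fun a (j : ({i} : Finset ι)) => X j a)
          = fun ω => g i (X i ω) := rfl
      have e2 : (fun v : ∀ j : s, β j => ∏ j ∈ s.attach, g j.1 (v j)) ∘
          (fun a (j : s) => X j a) = fun ω => ∏ j ∈ s, g j (X j ω) := by
        funext ω
        simp only [Function.comp_apply]
        exact Finset.prod_attach s fun x => g x (X x ω)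
      rwa [e1, e2] at key
    have hmul := hYZ.integral_fun_mul_eq_mul_integral
      ((hgmeas i).comp (hXmeas i)).aestronglyMeasurable
      (Finset.measurable_prod _ fun j _ => (hgmeas j).comp (hXmeas j)).aestronglyMeasurable
    rw [Finset.prod_insert hi]
    calc ∫ ω, ∏ j ∈ insert i s, g j (X j ω) ∂ℙ
        = ∫ ω, g i (X i ω) * ∏ j ∈ s, g j (X j ω) ∂ℙ := by
          congr 1; funext ω; rw [Finset.prod_insert hi]
      _ = (∫ ω, g i (X i ω) ∂ℙ) * ∫ ω, ∏ j ∈ s, g j (X j ω) ∂ℙ := hmul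
      _ = (∫ ω, g i (X i ω) ∂ℙ) * ∏ j ∈ s, ∫ ω, g j (X j ω) ∂ℙ := by rw [ih]

/-- Second moment of the optimally-tuned Poisson estimator: with
`κ ~ Poisson(λ)`, `λ = (Δ∫(U−φ)²)^{1/2}`, `Φ ≤ φ ≤ U`, the estimator
`ρ̂ = (Δ^κ e^{−(U−Φ)Δ}/(κ! p(κ)))∏_{k<κ}(U−φ(χ_k))` (with
`p(k) = λ^k e^{−λ}/k!`) satisfies `E[ρ̂²] = exp(2(λ−(U−Φ)Δ)) ≤ 1`. -/
theorem optimal_estimator_second_moment {Ω : Type*} [MeasureSpace Ω]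
    [IsProbabilityMeasure (ℙ : Measure Ω)]
    (t0 Δ U Φ lam : ℝ) (hΔ : 0 < Δ) (hΦU : Φ < U)
    (φ : ℝ → ℝ) (hφmeas : Measurable φ)
    (hφ : ∀ x ∈ Set.Icc t0 (t0 + Δ), φ x ∈ Set.Icc Φ U)
    (hlam : lam = Real.sqrt (Δ * ∫ t in t0..(t0 + Δ), (U - φ t) ^ 2))
    (hlampos : 0 < lam)
    (κ : Ω → ℕ) (χ : ℕ → Ω → ℝ)
    (hκmeas : Measurable κ) (hχmeas : ∀ k, Measurable (χ k))
    (hindep : iIndepFun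
      (m := fun o : Option ℕ =>
        Option.rec (inferInstance : MeasurableSpace ℕ)
          (fun _ => (inferInstance : MeasurableSpace ℝ)) o)
      (fun o => Option.rec
        (motive := fun o => Ω → Option.rec ℕ (fun _ => ℝ) o) κ (fun k => χ k) o) ℙ)
    (hκ : Measure.map κ ℙ = poissonMeasure (Real.toNNReal lam))
    (hχ : ∀ k, Measure.map (χ k) ℙ =
      (ENNReal.ofReal Δ)⁻¹ • volume.restrict (Set.Icc t0 (t0 + Δ)))
    (ρhat : Ω → ℝ)
    (hρ : ∀ ω, ρhat ω = Δ ^ (κ ω) * Real.exp (-(U - Φ) * Δ) /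
        ((Nat.factorial (κ ω) : ℝ) *
          (lam ^ (κ ω) * Real.exp (-lam) / (Nat.factorial (κ ω) : ℝ))) *
      ∏ k ∈ Finset.range (κ ω), (U - φ (χ k ω))) :
    ∫ ω, (ρhat ω) ^ 2 ∂ℙ = Real.exp (2 * (lam - (U - Φ) * Δ)) ∧
    Real.exp (2 * (lam - (U - Φ) * Δ)) ≤ 1 := by
  classical
  have hΔle : t0 ≤ t0 + Δ := by linarith
  obtain ⟨g, hgdef⟩ : ∃ g : ℝ → ℝ, g = fun t => (U - φ t) ^ 2 := ⟨_, rfl⟩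
  have hgmeas : Measurable g := by
    rw [hgdef]; exact (measurable_const.sub hφmeas).pow_const 2
  have hgnn : ∀ x, 0 ≤ g x := by rw [hgdef]; exact fun x => sq_nonneg _
  have hI : 0 ≤ ∫ t in t0..(t0 + Δ), (U - φ t) ^ 2 :=
    intervalIntegral.integral_nonneg hΔle fun t _ => sq_nonneg _
  have hlamsq : lam ^ 2 = Δ * ∫ t in t0..(t0 + Δ), (U - φ t) ^ 2 := by
    rw [hlam, Real.sq_sqrt (mul_nonneg hΔ.le hI)]
  -- the second claim
  have hgbound : ∀ t ∈ Set.Icc t0 (t0 + Δ), g t ≤ (U - Φ) ^ 2 := by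
    intro t ht
    obtain ⟨h1, h2⟩ := hφ t ht
    simp only [hgdef]
    nlinarith
  have hgIcc : IntegrableOn g (Set.Icc t0 (t0 + Δ)) := by
    refine Integrable.mono' (integrable_const ((U - Φ) ^ 2)) hgmeas.aestronglyMeasurable ?_
    filter_upwards [ae_restrict_mem measurableSet_Icc] with t ht
    rw [Real.norm_eq_abs, abs_of_nonneg (hgnn t)]
    exact hgbound t ht
  have hgII : IntervalIntegrable g volume t0 (t0 + Δ) := by
    rw [intervalIntegrable_iff_integrableOn_Ioc_of_le hΔle]
    exact hgIcc.mono_set Set.Ioc_subset_Icc_self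
  have hlamle : lam ≤ (U - Φ) * Δ := by
    have hIle : ∫ t in t0..(t0 + Δ), (U - φ t) ^ 2 ≤ Δ * (U - Φ) ^ 2 := by
      have := intervalIntegral.integral_mono_on hΔle hgII
        (intervalIntegrable_const (c := (U - Φ) ^ 2)) hgbound
      rw [intervalIntegral.integral_const, smul_eq_mul, add_sub_cancel_left] at this
      simpa only [hgdef] using this
    calc lam = Real.sqrt (Δ * ∫ t in t0..(t0 + Δ), (U - φ t) ^ 2) := hlam
      _ ≤ Real.sqrt (Δ * (Δ * (U - Φ) ^ 2)) := Real.sqrt_le_sqrt (by nlinarith [hIle])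
      _ = (U - Φ) * Δ := by
          rw [show Δ * (Δ * (U - Φ) ^ 2) = ((U - Φ) * Δ) ^ 2 by ring,
            Real.sqrt_sq (by nlinarith)]
  refine ⟨?_, Real.exp_le_one_iff.mpr (by nlinarith)⟩
  -- expectation of g ∘ χ k
  have hEg : ∀ k, ∫ ω, g (χ k ω) ∂ℙ = lam ^ 2 / Δ ^ 2 := by
    intro k
    rw [← integral_map (hχmeas k).aemeasurable hgmeas.aestronglyMeasurable, hχ k,
      integral_smul_measure]
    have h1 : ∫ x in Set.Icc t0 (t0 + Δ), g x = lam ^ 2 / Δ := by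
      rw [MeasureTheory.integral_Icc_eq_integral_Ioc, ← intervalIntegral.integral_of_le hΔle]
      simp only [hgdef]
      rw [eq_div_iff hΔ.ne']
      linarith [hlamsq]
    rw [h1, ENNReal.toReal_inv, ENNReal.toReal_ofReal hΔ.le, smul_eq_mul]
    field_simp
  -- probability of κ = m
  have hP : ∀ m : ℕ, ∫ ω, Set.indicator ({m} : Set ℕ) (1 : ℕ → ℝ) (κ ω) ∂ℙ =
      rexp (-lam) * lam ^ m / (Nat.factorial m : ℝ) := by
    intro m
    rw [← integral_map hκmeas.aemeasurable Measurable.of_discrete.aestronglyMeasurable, hκ,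
      integral_indicator_one (measurableSet_singleton m)]
    rw [poissonMeasure_real_singleton, Real.coe_toNNReal lam hlampos.le]
  -- χ k lands in the interval a.s.
  have haek : ∀ k, ∀ᵐ ω ∂ℙ, χ k ω ∈ Set.Icc t0 (t0 + Δ) := by
    intro k
    have h0 : ℙ (χ k ⁻¹' (Set.Icc t0 (t0 + Δ))ᶜ) = 0 := by
      rw [← Measure.map_apply (hχmeas k) measurableSet_Icc.compl, hχ k,
        Measure.smul_apply, Measure.restrict_apply measurableSet_Icc.compl,
        Set.compl_inter_self, measure_empty, smul_zero]
    rw [ae_iff]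
    exact h0
  have hae : ∀ᵐ ω ∂ℙ, ∀ k, χ k ω ∈ Set.Icc t0 (t0 + Δ) := ae_all_iff.mpr haek
  -- splitting of expectations
  have hsplit : ∀ (f₀ : ℕ → ℝ), (∀ x, 0 ≤ f₀ x) → ∀ n,
      ∫ ω, f₀ (κ ω) * ∏ k ∈ Finset.range n, g (χ k ω) ∂ℙ =
        (∫ ω, f₀ (κ ω) ∂ℙ) * ∏ k ∈ Finset.range n, ∫ ω, g (χ k ω) ∂ℙ := by
    intro f₀ hf₀nn n
    have hXmeas : ∀ o : Option ℕ,
        @Measurable Ω (Option.rec ℕ (fun _ => ℝ) o) _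
          (Option.rec (inferInstance : MeasurableSpace ℕ)
            (fun _ => (inferInstance : MeasurableSpace ℝ)) o)
        (Option.rec (motive := fun o => Ω → Option.rec ℕ (fun _ => ℝ) o) κ (fun k => χ k) o) :=
      fun o => by cases o with
        | none => exact hκmeas
        | some k => exact hχmeas k
    have hggmeas : ∀ o : Option ℕ,
        @Measurable (Option.rec ℕ (fun _ => ℝ) o) ℝ
          (Option.rec (inferInstance : MeasurableSpace ℕ)
            (fun _ => (inferInstance : MeasurableSpace ℝ)) o) _
        (Option.rec (motive := fun o => Option.rec ℕ (fun _ => ℝ) o → ℝ) f₀ (fun _ => g) o) :=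
      fun o => by cases o with
        | none => exact Measurable.of_discrete
        | some k => exact hgmeas
    have hggnn : ∀ (o : Option ℕ) x, 0 ≤
        (Option.rec (motive := fun o => Option.rec ℕ (fun _ => ℝ) o → ℝ) f₀ (fun _ => g) o) x :=
      fun o => by cases o with
        | none => exact hf₀nn
        | some k => exact hgnn
    have key := aux_prod_split _ hXmeas hindep _ hggmeas hggnn
      (insert none ((Finset.range n).image some))
    have hnone : (none : Option ℕ) ∉ (Finset.range n).image some := by simp
    rw [Finset.prod_insert hnone, Finset.prod_image (fun a _ b _ h => Option.some_injective _ h)]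
      at key
    have heq : (fun ω => ∏ i ∈ insert none ((Finset.range n).image some),
        (Option.rec (motive := fun o => Option.rec ℕ (fun _ => ℝ) o → ℝ) f₀ (fun _ => g) i)
          ((Option.rec (motive := fun o => Ω → Option.rec ℕ (fun _ => ℝ) o) κ (fun k => χ k) i) ω))
        = fun ω => f₀ (κ ω) * ∏ k ∈ Finset.range n, g (χ k ω) := by
      funext ω
      rw [Finset.prod_insert hnone, Finset.prod_image (fun a _ b _ h => Option.some_injective _ h)]
    rw [heq] at key
    exact key
  -- the summand functions
  obtain ⟨c, hc⟩ : ∃ c : ℕ → ℝ, c = fun m => (Δ ^ m * rexp (-(U - Φ) * Δ) /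
      ((Nat.factorial m : ℝ) * (lam ^ m * rexp (-lam) / (Nat.factorial m : ℝ)))) ^ 2 := ⟨_, rfl⟩
  obtain ⟨Y, hYdef⟩ : ∃ Y : ℕ → Ω → ℝ, Y = fun m ω =>
      Set.indicator ({m} : Set ℕ) (1 : ℕ → ℝ) (κ ω) *
        (c m * ∏ k ∈ Finset.range m, g (χ k ω)) := ⟨_, rfl⟩
  have hcnn : ∀ m, 0 ≤ c m := fun m => by simp only [hc]; exact sq_nonneg _
  have hρ2 : ∀ ω, ρhat ω ^ 2 = ∑' m, Y m ω := by
    intro ω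
    have hz : ∀ m, m ≠ κ ω → Y m ω = 0 := by
      intro m hm
      simp only [hYdef]
      rw [Set.indicator_of_notMem (by simpa using Ne.symm hm), zero_mul]
    rw [tsum_eq_single (κ ω) hz]
    simp only [hYdef]
    rw [Set.indicator_of_mem (Set.mem_singleton _), Pi.one_apply, one_mul, hρ ω, mul_pow,
      ← Finset.prod_pow]
    simp only [hc, hgdef]
  have hYmeas : ∀ m, Measurable (Y m) := by
    intro m
    simp only [hYdef]
    have hind : Measurable (Set.indicator ({m} : Set ℕ) (1 : ℕ → ℝ)) := Measurable.of_discrete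
    refine (hind.comp hκmeas).mul (measurable_const.mul ?_)
    exact Finset.measurable_prod _ fun k _ => hgmeas.comp (hχmeas k)
  have hYnn : ∀ m ω, 0 ≤ Y m ω := by
    intro m ω
    simp only [hYdef]
    exact mul_nonneg (Set.indicator_nonneg (fun _ _ => zero_le_one) _)
      (mul_nonneg (hcnn m) (Finset.prod_nonneg fun k _ => hgnn _))
  have hint : ∀ m, Integrable (Y m) ℙ := by
    intro m
    refine Integrable.mono' (integrable_const (c m * ((U - Φ) ^ 2) ^ m))
      (hYmeas m).aestronglyMeasurable ?_
    filter_upwards [hae] with ω hω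
    rw [Real.norm_eq_abs, abs_of_nonneg (hYnn m ω)]
    simp only [hYdef]
    have h1 : Set.indicator ({m} : Set ℕ) (1 : ℕ → ℝ) (κ ω) ≤ 1 := by
      classical
      rw [Set.indicator_apply]
      split_ifs <;> simp
    have h2 : ∏ k ∈ Finset.range m, g (χ k ω) ≤ ((U - Φ) ^ 2) ^ m := by
      calc ∏ k ∈ Finset.range m, g (χ k ω) ≤ ∏ k ∈ Finset.range m, (U - Φ) ^ 2 :=
            Finset.prod_le_prod (fun k _ => hgnn _) (fun k _ => hgbound _ (hω k))
        _ = ((U - Φ) ^ 2) ^ m := by rw [Finset.prod_const, Finset.card_range]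
    have h3 : 0 ≤ c m * ∏ k ∈ Finset.range m, g (χ k ω) :=
      mul_nonneg (hcnn m) (Finset.prod_nonneg fun k _ => hgnn _)
    refine le_trans (mul_le_of_le_one_left h3 h1) ?_
    exact mul_le_mul_of_nonneg_left h2 (hcnn m)
  have hval : ∀ m, ∫ ω, Y m ω ∂ℙ =
      rexp (2 * (lam - (U - Φ) * Δ)) * (rexp (-lam) * (lam ^ m / (Nat.factorial m : ℝ))) := by
    intro m
    have e : Y m = fun ω => c m * (Set.indicator ({m} : Set ℕ) (1 : ℕ → ℝ) (κ ω) *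
        ∏ k ∈ Finset.range m, g (χ k ω)) := by
      rw [hYdef]; funext ω; ring
    calc ∫ ω, Y m ω ∂ℙ
        = ∫ ω, c m * (Set.indicator ({m} : Set ℕ) (1 : ℕ → ℝ) (κ ω) *
            ∏ k ∈ Finset.range m, g (χ k ω)) ∂ℙ := by rw [e]
      _ = c m * ∫ ω, Set.indicator ({m} : Set ℕ) (1 : ℕ → ℝ) (κ ω) *
            ∏ k ∈ Finset.range m, g (χ k ω) ∂ℙ := integral_const_mul _ _
      _ = c m * ((rexp (-lam) * lam ^ m / (Nat.factorial m : ℝ)) * (lam ^ 2 / Δ ^ 2) ^ m) := by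
          rw [hsplit (Set.indicator ({m} : Set ℕ) (1 : ℕ → ℝ)) (fun x => Set.indicator_nonneg (fun _ _ => zero_le_one) x) m, hP m]
          congr 1
          rw [Finset.prod_congr rfl fun k _ => hEg k, Finset.prod_const, Finset.card_range]
      _ = rexp (2 * (lam - (U - Φ) * Δ)) * (rexp (-lam) * (lam ^ m / (Nat.factorial m : ℝ))) := by
          have hfac : ((Nat.factorial m : ℝ)) ≠ 0 := Nat.cast_ne_zero.mpr (Nat.factorial_ne_zero m)
          have he2 : rexp (2 * (lam - (U - Φ) * Δ)) =
              (rexp lam * rexp lam) * (rexp (-(U - Φ) * Δ) * rexp (-(U - Φ) * Δ)) := by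
            rw [← Real.exp_add, ← Real.exp_add, ← Real.exp_add]
            ring_nf
          rw [hc]
          simp only
          rw [Real.exp_neg lam, he2]
          have hE1 : rexp lam ≠ 0 := Real.exp_ne_zero lam
          have hΔ0 : Δ ≠ 0 := hΔ.ne'
          field_simp
          ring_nf
          rw [mul_right_comm, ← mul_pow, mul_inv_cancel₀ hΔ0, one_pow, one_mul]
  have hr : Summable (fun m : ℕ => rexp (2 * (lam - (U - Φ) * Δ)) *
      (rexp (-lam) * (lam ^ m / (Nat.factorial m : ℝ)))) :=
    ((Real.summable_pow_div_factorial lam).mul_left _).mul_left _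
  have hrtsum : ∑' m : ℕ, rexp (2 * (lam - (U - Φ) * Δ)) *
      (rexp (-lam) * (lam ^ m / (Nat.factorial m : ℝ))) = rexp (2 * (lam - (U - Φ) * Δ)) := by
    rw [tsum_mul_left, tsum_mul_left]
    have hexp : ∑' m : ℕ, lam ^ m / (Nat.factorial m : ℝ) = rexp lam := by
      rw [Real.exp_eq_exp_ℝ, NormedSpace.exp_eq_tsum_div]
    rw [hexp, ← Real.exp_add, neg_add_cancel, Real.exp_zero, mul_one]
  have hlint : ∀ m, ∫⁻ ω, ‖Y m ω‖₊ ∂ℙ = ENNReal.ofReal (∫ ω, Y m ω ∂ℙ) := by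
    intro m
    rw [MeasureTheory.ofReal_integral_eq_lintegral_ofReal (hint m)
      (Filter.Eventually.of_forall (hYnn m))]
    exact lintegral_congr fun ω => Real.enorm_eq_ofReal (hYnn m ω)
  have hne : ∑' m, ∫⁻ ω, ‖Y m ω‖₊ ∂ℙ ≠ ⊤ := by
    have heq : ∑' m, ∫⁻ ω, ‖Y m ω‖₊ ∂ℙ =
        ENNReal.ofReal (rexp (2 * (lam - (U - Φ) * Δ))) := by
      calc ∑' m, ∫⁻ ω, ‖Y m ω‖₊ ∂ℙ
          = ∑' m, ENNReal.ofReal (rexp (2 * (lam - (U - Φ) * Δ)) *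
              (rexp (-lam) * (lam ^ m / (Nat.factorial m : ℝ)))) := by
            refine tsum_congr fun m => ?_
            rw [hlint m, hval m]
        _ = ENNReal.ofReal (∑' m : ℕ, rexp (2 * (lam - (U - Φ) * Δ)) *
              (rexp (-lam) * (lam ^ m / (Nat.factorial m : ℝ)))) :=
            (ENNReal.ofReal_tsum_of_nonneg (fun m => mul_nonneg (Real.exp_pos _).le
              (mul_nonneg (Real.exp_pos _).le (div_nonneg (pow_nonneg hlampos.le _)
                (Nat.cast_nonneg _)))) hr).symm
        _ = ENNReal.ofReal (rexp (2 * (lam - (U - Φ) * Δ))) := by rw [hrtsum]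
    rw [heq]
    exact ENNReal.ofReal_ne_top
  calc ∫ ω, ρhat ω ^ 2 ∂ℙ
      = ∫ ω, ∑' m, Y m ω ∂ℙ := by
        congr 1
        funext ω
        exact hρ2 ω
    _ = ∑' m, ∫ ω, Y m ω ∂ℙ :=
        integral_tsum (fun m => (hYmeas m).aestronglyMeasurable) hne
    _ = ∑' m : ℕ, rexp (2 * (lam - (U - Φ) * Δ)) *
          (rexp (-lam) * (lam ^ m / (Nat.factorial m : ℝ))) := tsum_congr fun m => hval m
    _ = rexp (2 * (lam - (U - Φ) * Δ)) := hrtsum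
end
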